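/- Let a, b, c ∈ ℂ. A polynomial k₁ ∈ ℂ[λ,∂] satisfies both identities ((a−1)λ−μ+b)·k₁(λ+μ,∂) = (∂+λ+c)·k₁(μ,λ+∂) − (∂+μ+aλ+b)·k₁(μ,∂) (in ℂ[λ,μ,∂]) and k₁(λ,∂) = k₁(−λ−∂,∂) (in ℂ[λ,∂]) if and only if either k₁ = 0, or a = 1, c = 2b and k₁ is a constant polynomial. -/

import Mathlib

open MvPolynomial

noncomputable section

/-- Polynomials in `ℂ[λ, ∂]`: variable `0` is `λ`, variable `1` is `∂`. -/
abbrev P2 : Type := MvPolynomial (Fin 2) ℂ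

/-- Polynomials in `ℂ[λ, μ, ∂]`: variable `0` is `λ`, variable `1` is `μ`, variable `2` is `∂`. -/
abbrev P3 : Type := MvPolynomial (Fin 3) ℂ

/-- Substitution: `sb p u v` is `p(u, v)`, the image of `p` under `λ ↦ u`, `∂ ↦ v`. -/
def sb {n : ℕ} (p : P2) (u v : MvPolynomial (Fin n) ℂ) : MvPolynomial (Fin n) ℂ :=
  aeval ![u, v] p

/-- `λ` in `ℂ[λ,μ,∂]`. -/
def lm : P3 := X 0
/-- `μ` in `ℂ[λ,μ,∂]`. -/
def mu : P3 := X 1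
/-- `∂` in `ℂ[λ,μ,∂]`. -/
def pa : P3 := X 2
/-- `λ` in `ℂ[λ,∂]`. -/
def lm' : P2 := X 0
/-- `∂` in `ℂ[λ,∂]`. -/
def pa' : P2 := X 1

lemma sb_comp {n m : ℕ} (k : P2) (u v : MvPolynomial (Fin n) ℂ)
    (M : Fin n → MvPolynomial (Fin m) ℂ) :
    aeval M (sb k u v) = sb k (aeval M u) (aeval M v) := by
  unfold sb
  rw [show (aeval M) ((aeval ![u, v]) k) = (((aeval M).comp (aeval ![u,v])) k) from rfl,
    comp_aeval]
  have hfun : (fun i => aeval M (![u,v] i)) = ![aeval M u, aeval M v] := by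
    funext i; fin_cases i <;> simp
  rw [hfun]

lemma sb_zero {n : ℕ} (u v : MvPolynomial (Fin n) ℂ) : sb 0 u v = 0 :=
  map_zero (aeval ![u, v])

lemma sb_X (k : P2) : sb k (X 0) (X 1) = k := by
  unfold sb
  have h : ![(X 0 : P2), X 1] = X := by funext i; fin_cases i <;> rfl
  rw [h, aeval_X_left_apply]

lemma sb_zero_zero {n : ℕ} (k : P2) :
    sb k (0 : MvPolynomial (Fin n) ℂ) 0 = C (constantCoeff k) := by
  unfold sb
  have h : ![(0: MvPolynomial (Fin n) ℂ), 0] = (0 : Fin 2 → MvPolynomial (Fin n) ℂ) := by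
    funext i; fin_cases i <;> rfl
  rw [h, aeval_zero]
  rfl

set_option maxHeartbeats 4000000 in
/-- `k₁ ∈ ℂ[λ,∂]` satisfies
`((a−1)λ−μ+b)·k₁(λ+μ,∂) = (∂+λ+c)·k₁(μ,λ+∂) − (∂+μ+aλ+b)·k₁(μ,∂)` and
`k₁(λ,∂) = k₁(−λ−∂,∂)` iff `k₁ = 0`, or `a = 1`, `c = 2b` and `k₁` is constant. -/
theorem stmt2 (a b c : ℂ) (k1 : P2) :
    (((C (a - 1) * lm - mu + C b) * sb k1 (lm + mu) pa =
        (pa + lm + C c) * sb k1 mu (lm + pa) - (pa + mu + C a * lm + C b) * sb k1 mu pa) ∧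
      k1 = sb k1 (-lm' - pa') pa') ↔
    (k1 = 0 ∨ (a = 1 ∧ c = 2 * b ∧ ∃ k : ℂ, k1 = C k)) := by
  constructor
  · rintro ⟨e1, e2⟩
    by_cases hk : k1 = 0
    · exact Or.inl hk
    right
    -- Step 1 : c = 2b
    have hc : c = 2 * b := by
      have h0 := congrArg (aeval ![(0:P2), X 0, X 1]) e1
      simp only [lm, mu, pa, map_mul, map_add, map_sub, sb_comp, aeval_X, aeval_C,
        Matrix.cons_val_zero, Matrix.cons_val_one, Matrix.head_cons, Matrix.cons_val_two,
        Matrix.tail_cons, algebraMap_eq, zero_add, add_zero, sb_X] at h0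
      have h1 : C (2*b - c) * k1 = 0 := by
        rw [map_sub, map_mul]
        simp only [map_ofNat]
        linear_combination h0
      rcases mul_eq_zero.mp h1 with h | h
      · rw [C_eq_zero] at h; exact (sub_eq_zero.mp h).symm
      · exact absurd h hk
    subst hc
    -- Step 2 : the mu := 0 specialization (star)
    have h1 := congrArg (aeval ![(X 0 : P2), (0:P2), X 1]) e1
    simp only [lm, mu, pa, map_mul, map_add, map_sub, map_one, map_ofNat, sb_comp, aeval_X,
      aeval_C, Matrix.cons_val_zero, Matrix.cons_val_one, Matrix.head_cons, Matrix.cons_val_two,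
      Matrix.tail_cons, algebraMap_eq, zero_add, add_zero, sub_zero, sb_X] at h1
    have star : ((C a - 1) * X 0 + C b) * k1 =
        (X 1 + X 0 + 2 * C b) * sb k1 0 (X 0 + X 1)
          - (X 1 + C a * X 0 + C b) * sb k1 0 (X 1) := by
      linear_combination h1
    -- Step 2b : from symmetry, f(-λ) = f(λ) style relation
    have h2 := congrArg (aeval ![(0:P2), X 1]) e2
    rw [show (aeval ![(0:P2), X 1]) k1 = sb k1 0 (X 1) from rfl] at h2
    simp only [lm', pa', map_neg, map_sub, sb_comp, aeval_X,
      Matrix.cons_val_zero, Matrix.cons_val_one, Matrix.head_cons,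
      neg_zero, zero_sub] at h2
    -- h2 : sb k1 0 (X 1) = sb k1 (-X 1) (X 1)
    -- Step 3 : relation (V)
    have h3 := congrArg (aeval ![(-(X 1) : P2), X 1]) star
    simp only [map_mul, map_add, map_sub, map_one, map_neg, map_ofNat, sb_comp, aeval_X, aeval_C,
      Matrix.cons_val_zero, Matrix.cons_val_one, Matrix.head_cons,
      algebraMap_eq, map_zero, zero_add, add_zero, neg_add_cancel, add_neg_cancel, sb_zero_zero] at h3
    rw [show (aeval ![(-(X 1) : P2), X 1]) k1 = sb k1 (-(X 1)) (X 1) from rfl] at h3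
    rw [← h2] at h3
    have h2P : (2 : P2) ≠ 0 := by
      intro h
      have h' := congrArg constantCoeff h
      simp only [map_ofNat, map_zero] at h'
      norm_num at h'
    have hV : ((C b - (C a - 1) * X 1) * sb k1 0 (X 1) : P2) = C b * C (constantCoeff k1) := by
      apply mul_left_cancel₀ h2P
      linear_combination h3
    -- Step 4 : a = 1
    have ha1 : a = 1 := by
      by_contra ha
      have hane : a - 1 ≠ 0 := sub_ne_zero.mpr ha
      -- evaluate at X 1 := b/(a-1)
      have h4 := congrArg (aeval ![(X 0 : P2), C (b/(a-1))]) hV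
      simp only [map_mul, map_add, map_sub, map_one, sb_comp, aeval_X, aeval_C,
        Matrix.cons_val_zero, Matrix.cons_val_one, Matrix.head_cons,
        algebraMap_eq] at h4
      have hco : (C b - (C a - 1) * C (b/(a-1)) : P2) = 0 := by
        rw [show ((C a - 1 : P2)) = C (a-1) by rw [map_sub, map_one], ← map_mul, ← map_sub,
          C_eq_zero]
        field_simp
        ring
      rw [hco, zero_mul] at h4
      have hbk : b * constantCoeff k1 = 0 := by
        have := h4.symm
        rw [← map_mul, C_eq_zero] at this
        exact this
      rw [← map_mul, hbk, map_zero] at hV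
      have hcoefne : (C b - (C a - 1) * X 1 : P2) ≠ 0 := by
        intro h
        have e0 := congrArg (eval ![(0:ℂ), 0]) h
        have e2' := congrArg (eval ![(0:ℂ), 1]) h
        simp only [map_sub, map_mul, map_one, eval_C, eval_X, Matrix.cons_val_zero,
          Matrix.cons_val_one, Matrix.head_cons, map_zero, mul_zero, mul_one, sub_zero] at e0 e2'
        -- e0 : b = 0, e2' : b - (a - 1) = 0
        apply hane
        rw [e0] at e2'
        linear_combination -e2'
      have hf0 : sb k1 (0:P2) (X 1) = 0 := by
        rcases mul_eq_zero.mp hV with h | h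
        · exact absurd h hcoefne
        · exact h
      have hF2 : sb k1 (0:P2) (X 0 + X 1) = 0 := by
        have h5 := congrArg (aeval ![(X 0 : P2), X 0 + X 1]) hf0
        simp only [map_zero, sb_comp, aeval_X, map_add, Matrix.cons_val_zero,
          Matrix.cons_val_one, Matrix.head_cons] at h5
        exact h5
      rw [hf0, hF2] at star
      simp only [mul_zero, sub_zero] at star
      have : ((C a - 1) * X 0 + C b : P2) = 0 := by
        rcases mul_eq_zero.mp star with h | h
        · exact h
        · exact absurd h hk
      have e0 := congrArg (eval ![(0:ℂ), 0]) this
      have e1' := congrArg (eval ![(1:ℂ), 0]) this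
      simp only [map_add, map_mul, map_sub, map_one, map_zero, eval_C, eval_X,
        Matrix.cons_val_zero, Matrix.cons_val_one, Matrix.head_cons, mul_zero, mul_one,
        zero_add, add_zero] at e0 e1'
      apply hane
      rw [e0] at e1'
      linear_combination e1'
    subst ha1
    refine ⟨rfl, rfl, constantCoeff k1, ?_⟩
    simp only [map_one] at star hV
    by_cases hb : b = 0
    · -- hard case : a = 1, b = 0
      subst hb
      simp only [lm, mu, pa, map_zero, map_one, map_mul, sub_self, zero_mul, mul_zero,
        add_zero, zero_add, mul_one, one_mul, zero_sub] at e1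
      have h7 := congrArg (aeval ![(X 1 : P2), X 0, (0:P2)]) e1
      simp only [map_mul, map_add, map_sub, map_neg, map_zero, map_one, sb_comp, aeval_X, aeval_C,
        Matrix.cons_val_zero, Matrix.cons_val_one, Matrix.head_cons, Matrix.cons_val_two,
        Matrix.tail_cons, algebraMap_eq, zero_add, add_zero, sb_X] at h7
      rw [show (X 1 + X 0 : P2) = X 0 + X 1 from add_comm _ _] at h7
      have h7' : (X 1 : P2) * k1 =
          (X 0 + X 1) * sb k1 (X 0) 0 - X 0 * sb k1 (X 0 + X 1) 0 := by
        linear_combination -h7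
      have hA := congrArg (aeval ![(X 0 + X 1 : P3), X 2]) h7'
      simp only [map_mul, map_add, map_sub, map_zero, sb_comp, aeval_X,
        Matrix.cons_val_zero, Matrix.cons_val_one, Matrix.head_cons] at hA
      rw [show (aeval ![(X 0 + X 1 : P3), X 2]) k1 = sb k1 (X 0 + X 1) (X 2) from rfl] at hA
      have hB := congrArg (aeval ![(X 1 : P3), X 0 + X 2]) h7'
      simp only [map_mul, map_add, map_sub, map_zero, sb_comp, aeval_X,
        Matrix.cons_val_zero, Matrix.cons_val_one, Matrix.head_cons] at hB
      rw [show (aeval ![(X 1 : P3), X 0 + X 2]) k1 = sb k1 (X 1) (X 0 + X 2) from rfl] at hB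
      rw [show ((X 1:P3) + (X 0 + X 2)) = X 0 + X 1 + X 2 from by ring] at hB
      have hCc := congrArg (aeval ![(X 1 : P3), X 2]) h7'
      simp only [map_mul, map_add, map_sub, map_zero, sb_comp, aeval_X,
        Matrix.cons_val_zero, Matrix.cons_val_one, Matrix.head_cons] at hCc
      rw [show (aeval ![(X 1 : P3), X 2]) k1 = sb k1 (X 1) (X 2) from rfl] at hCc
      have key : ((X 1 : P3) * (X 0 + X 1 + X 2)) *
          (sb k1 (X 0 + X 1 + X 2) (0:P3) - sb k1 (X 0 + X 1) 0
            - sb k1 (X 1 + X 2) 0 + sb k1 (X 1) 0) = 0 := by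
        linear_combination (X 2:P3) * e1 + (X 1:P3) * hA + (X 2:P3) * hB
          - ((X 0:P3) + X 1 + X 2) * hCc
      have hmuS : ((X 1 : P3) * (X 0 + X 1 + X 2)) ≠ 0 := by
        intro h
        have h' := congrArg (eval (fun _ => (1:ℂ))) h
        simp only [map_mul, map_add, map_zero, eval_X] at h'
        norm_num at h'
      have hadd3 := (mul_eq_zero.mp key).resolve_left hmuS
      have hadd := congrArg (aeval ![(-(X 0):P2), X 0, X 1]) hadd3
      simp only [map_mul, map_add, map_sub, map_zero, map_neg, sb_comp, aeval_X,
        Matrix.cons_val_zero, Matrix.cons_val_one, Matrix.head_cons, Matrix.cons_val_two,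
        Matrix.tail_cons, neg_add_cancel, zero_add, add_zero, sb_zero_zero] at hadd
      have h8 := congrArg (aeval ![(X 0:P2), (0:P2)]) e2
      rw [show (aeval ![(X 0:P2), (0:P2)]) k1 = sb k1 (X 0) (0:P2) from rfl] at h8
      simp only [lm', pa', map_neg, map_sub, sb_comp, aeval_X,
        Matrix.cons_val_zero, Matrix.cons_val_one, Matrix.head_cons, sub_zero] at h8
      have h9 := congrArg (aeval ![(X 0:P2), -(X 0:P2)]) hadd
      simp only [map_mul, map_add, map_sub, map_zero, map_neg, aeval_C, algebraMap_eq, sb_comp,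
        aeval_X, Matrix.cons_val_zero, Matrix.cons_val_one, Matrix.head_cons,
        add_neg_cancel, sb_zero_zero] at h9
      rw [← h8] at h9
      have hgc : sb k1 (X 0 : P2) (0:P2) = C (constantCoeff k1) := by
        apply mul_left_cancel₀ h2P
        linear_combination h9
      have hG2c : sb k1 ((X 0 : P2) + X 1) (0:P2) = C (constantCoeff k1) := by
        have h10 := congrArg (aeval ![(X 0 + X 1:P2), X 1]) hgc
        simp only [map_zero, map_add, sb_comp, aeval_X, aeval_C, algebraMap_eq,
          Matrix.cons_val_zero, Matrix.cons_val_one, Matrix.head_cons] at h10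
        exact h10
      rw [hgc, hG2c] at h7'
      have hX1 : (X 1 : P2) ≠ 0 := X_ne_zero 1
      apply mul_left_cancel₀ hX1
      linear_combination h7'
    · -- easy case : b ≠ 0
      have hCb : (C b : P2) ≠ 0 := fun h => hb (C_eq_zero.mp h)
      have hfc : sb k1 (0:P2) (X 1) = C (constantCoeff k1) := by
        apply mul_left_cancel₀ hCb
        linear_combination hV
      have hF2c : sb k1 (0:P2) (X 0 + X 1) = C (constantCoeff k1) := by
        have h5 := congrArg (aeval ![(X 0 : P2), X 0 + X 1]) hfc
        simp only [map_zero, map_add, sb_comp, aeval_X, aeval_C, algebraMap_eq,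
          Matrix.cons_val_zero, Matrix.cons_val_one, Matrix.head_cons] at h5
        exact h5
      rw [hfc, hF2c] at star
      apply mul_left_cancel₀ hCb
      linear_combination star
  · rintro (rfl | ⟨rfl, rfl, k, rfl⟩)
    · constructor <;> simp only [sb_zero, mul_zero, sub_zero, zero_sub, neg_zero]
    · constructor
      · simp only [sb, aeval_C, algebraMap_eq, map_sub, map_add, map_mul, map_one, map_ofNat]
        ring
      · simp [sb, algebraMap_eq]


end
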